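/- Trees and step counting: in a finitely branching rooted tree T whose edges are labeled by elements of a set L, and given a subset K ⊆ L, if every leaf of the tree obtained by removing all maximal subtrees containing no K-labeled edges is the target of a K-labeled edge and the number of K-labeled edges in T is finite, then the pruned tree is finite. -/
import Mathlib


/-- A rooted, edge-labeled tree, given by a prefix-closed set of node positions
(lists of child indices) containing the root `[]`; `lab q` is the label of the edge
leading into the node `q` (meaningful for `q ≠ []`). -/
structure ETree (L : Type*) where
  nodes : Set (List ℕ)
  root_mem : [] ∈ nodes
  prefix_closed : ∀ p q : List ℕ, p <+: q → q ∈ nodes → p ∈ nodes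
  lab : List ℕ → L

/-- The set of edges of `T` whose label lies in `K` (an edge is identified with its
target node). -/
def ETree.edges {L : Type*} (T : ETree L) (K : Set L) : Set (List ℕ) :=
  {q | q ∈ T.nodes ∧ q ≠ [] ∧ T.lab q ∈ K}

/-- The pruned tree: remove all maximal subtrees containing no `K`-labeled edge, i.e.
keep the root and every node lying on the path to (or below, as target of) a `K`-edge. -/
def ETree.pruned {L : Type*} (T : ETree L) (K : Set L) : Set (List ℕ) :=
  {p | p ∈ T.nodes ∧ (p = [] ∨ ∃ q, q ∈ T.nodes ∧ p <+: q ∧ q ≠ [] ∧ T.lab q ∈ K)}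

/-- in a finitely branching rooted edge-labeled tree `T`, if every leaf of
the pruned tree (obtained by removing all maximal subtrees with no `K`-edges) is the target
of a `K`-labeled edge, and the number of `K`-labeled edges of `T` is finite, then the
pruned tree is finite. -/
theorem stmt_11 {L : Type*} (T : ETree L) (K : Set L)
    (hfb : ∀ p ∈ T.nodes, {i : ℕ | p ++ [i] ∈ T.nodes}.Finite)
    (hleaf : ∀ p ∈ T.pruned K, (∀ i : ℕ, p ++ [i] ∉ T.pruned K) →
      p ≠ [] ∧ T.lab p ∈ K)
    (hKfin : (T.edges K).Finite) :
    (T.pruned K).Finite := by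
  have h : T.pruned K ⊆ {[]} ∪ ⋃ q ∈ T.edges K, {p | p <+: q} := by
    rintro p ⟨hp, hcase⟩
    rcases hcase with rfl | ⟨q, hq, hpq, hqne, hlab⟩
    · exact Or.inl rfl
    · exact Or.inr (Set.mem_biUnion ⟨hq, hqne, hlab⟩ hpq)
  refine Set.Finite.subset (Set.Finite.union (Set.finite_singleton []) ?_) h
  refine Set.Finite.biUnion hKfin fun q _ => ?_
  have : {p | p <+: q} = {p | p ∈ q.inits} := by
    ext p; simp [List.mem_inits]
  rw [this]
  exact q.inits.finite_toSet
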